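/- (Worst-group error lower bound in terms of core and spurious weights.) Let w = [w_core, w_spu, w_noise] ∈ ℝ^{N+2} with (w_core, w_spu) ≠ (0,0), and let x = [x_core, x_spu, x_noise] be a test point from the minority group with y = 1, a = −1: x_core ∼ N(1, σ_core²), x_spu ∼ N(−1, σ_spu²), x_noise ∼ N(0, (σ_noise²/N)·I_N), all independent. If P(|⟨w_noise, x_noise⟩| > c₃) ≤ c₄ for constants c₃, c₄ > 0, then P(w·x < 0) ≥ Φ((−c₃ + w_spu − w_core)/√(w_core²·σ_core² + w_spu²·σ_spu²)) − c₄, where Φ is the standard Gaussian CDF. -/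

import Mathlib

open MeasureTheory ProbabilityTheory Real
open scoped ENNReal NNReal

/-- The standard Gaussian CDF `Φ`. -/
noncomputable def Phi (t : ℝ) : ℝ := (gaussianReal 0 1 (Set.Iic t)).toReal

lemma conv_pdfReal (μ₁ μ₂ : ℝ) (v₁ v₂ : ℝ≥0) (hv₁ : v₁ ≠ 0) (hv₂ : v₂ ≠ 0) (z : ℝ) :
    ∫ x, gaussianPDFReal μ₁ v₁ x * gaussianPDFReal μ₂ v₂ (z - x)
      = gaussianPDFReal (μ₁ + μ₂) (v₁ + v₂) z := by
  have hp : (0:ℝ) < v₁ := by positivity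
  have hq : (0:ℝ) < v₂ := by positivity
  set p : ℝ := (v₁ : ℝ)
  set q : ℝ := (v₂ : ℝ)
  set s : ℝ := p + q with hs
  have hspos : 0 < s := by positivity
  set a : ℝ := z - μ₁ - μ₂ with ha
  set b : ℝ := s / (2 * p * q) with hb
  have hbpos : 0 < b := by positivity
  set d : ℝ := μ₁ + a * p / s with hd
  have key : ∀ x, gaussianPDFReal μ₁ v₁ x * gaussianPDFReal μ₂ v₂ (z - x)
      = ((√(2 * π * p))⁻¹ * (√(2 * π * q))⁻¹ * rexp (-a ^ 2 / (2 * s)))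
        * rexp (-b * (x - d) ^ 2) := by
    intro x
    simp only [gaussianPDFReal]
    rw [show ∀ A B : ℝ, (√(2 * π * p))⁻¹ * rexp A * ((√(2 * π * q))⁻¹ * rexp B)
        = (√(2 * π * p))⁻¹ * (√(2 * π * q))⁻¹ * rexp (A + B) from
      fun A B => by rw [Real.exp_add]; ring]
    have hE : -(x - μ₁) ^ 2 / (2 * (v₁:ℝ)) + -(z - x - μ₂) ^ 2 / (2 * (v₂:ℝ))
        = -a ^ 2 / (2 * s) + -b * (x - d) ^ 2 := by
      rw [ha, hb, hd, hs]
      field_simp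
      ring
    rw [hE, Real.exp_add]
    ring
  rw [integral_congr_ae (ae_of_all _ key), integral_const_mul,
    integral_sub_right_eq_self (fun t => rexp (-b * t ^ 2)) d, integral_gaussian]
  simp only [gaussianPDFReal]
  have hconst : (√(2 * π * p))⁻¹ * (√(2 * π * q))⁻¹ * √(π / b) = (√(2 * π * s))⁻¹ := by
    rw [← Real.sqrt_inv, ← Real.sqrt_inv, ← Real.sqrt_inv, ← Real.sqrt_mul (by positivity),
      ← Real.sqrt_mul (by positivity)]
    congr 1
    rw [hb]
    field_simp
  push_cast
  rw [show (-a ^ 2 / (2 * s)) = (-(z - (μ₁ + μ₂)) ^ 2 / (2 * s)) by rw [ha]; ring_nf]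
  rw [← hconst]
  ring


lemma gaussianPDFReal_le (μ : ℝ) (v : ℝ≥0) (x : ℝ) :
    gaussianPDFReal μ v x ≤ (√(2 * π * v))⁻¹ := by
  rw [gaussianPDFReal]
  have h1 : rexp (-(x - μ) ^ 2 / (2 * v)) ≤ 1 := by
    rw [Real.exp_le_one_iff]
    apply div_nonpos_of_nonpos_of_nonneg (neg_nonpos.mpr (sq_nonneg _)) (by positivity)
  calc (√(2 * π * v))⁻¹ * rexp (-(x - μ) ^ 2 / (2 * v)) ≤ (√(2 * π * v))⁻¹ * 1 :=
        mul_le_mul_of_nonneg_left h1 (by positivity)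
    _ = _ := mul_one _


lemma conv_pdf_lintegral (μ₁ μ₂ : ℝ) (v₁ v₂ : ℝ≥0) (hv₁ : v₁ ≠ 0) (hv₂ : v₂ ≠ 0) (z : ℝ) :
    ∫⁻ x, gaussianPDF μ₁ v₁ x * gaussianPDF μ₂ v₂ (z - x)
      = gaussianPDF (μ₁ + μ₂) (v₁ + v₂) z := by
  have hInt : Integrable (fun x => gaussianPDFReal μ₁ v₁ x * gaussianPDFReal μ₂ v₂ (z - x)) := by
    refine Integrable.bdd_mul ((integrable_gaussianPDFReal μ₂ v₂).comp_sub_left z)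
      (measurable_gaussianPDFReal μ₁ v₁).aestronglyMeasurable (c := (√(2 * π * v₁))⁻¹) (ae_of_all _ fun x => ?_)
    rw [Real.norm_eq_abs, abs_of_nonneg (gaussianPDFReal_nonneg _ _ _)]
    exact gaussianPDFReal_le _ _ _
  simp_rw [gaussianPDF, ← ENNReal.ofReal_mul (gaussianPDFReal_nonneg _ _ _)]
  rw [← ofReal_integral_eq_lintegral_ofReal hInt (ae_of_all _ fun x =>
      mul_nonneg (gaussianPDFReal_nonneg _ _ _) (gaussianPDFReal_nonneg _ _ _)),
    conv_pdfReal μ₁ μ₂ v₁ v₂ hv₁ hv₂ z]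


lemma gaussian_conv (μ₁ μ₂ : ℝ) (v₁ v₂ : ℝ≥0) :
    Measure.map (fun p : ℝ × ℝ => p.1 + p.2) ((gaussianReal μ₁ v₁).prod (gaussianReal μ₂ v₂))
      = gaussianReal (μ₁ + μ₂) (v₁ + v₂) := by
  by_cases hv₁ : v₁ = 0
  · subst hv₁
    rw [gaussianReal_zero_var, Measure.dirac_prod,
      Measure.map_map (by fun_prop) (by fun_prop)]
    have : ((fun p : ℝ × ℝ => p.1 + p.2) ∘ Prod.mk μ₁) = fun y => μ₁ + y := rfl
    rw [this, gaussianReal_map_const_add, add_comm μ₂ μ₁, zero_add]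
  by_cases hv₂ : v₂ = 0
  · subst hv₂
    rw [gaussianReal_zero_var, Measure.prod_dirac,
      Measure.map_map (by fun_prop) (by fun_prop)]
    have : ((fun p : ℝ × ℝ => p.1 + p.2) ∘ (fun x => (x, μ₂))) = fun x => x + μ₂ := rfl
    rw [this, gaussianReal_map_add_const, add_zero]
  have hvs : v₁ + v₂ ≠ 0 := by simp [hv₁]
  ext s hs
  rw [Measure.map_apply (by fun_prop) hs,
    Measure.prod_apply (hs.preimage (by fun_prop))]
  have hind : Measurable (s.indicator (fun _ => (1 : ℝ≥0∞))) :=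
    measurable_const.indicator hs
  have step1 : ∀ x : ℝ, gaussianReal μ₂ v₂ (Prod.mk x ⁻¹' ((fun p : ℝ × ℝ => p.1 + p.2) ⁻¹' s))
      = ∫⁻ z, s.indicator 1 z * gaussianPDF μ₂ v₂ (z - x) := by
    intro x
    have hpre : (Prod.mk x ⁻¹' ((fun p : ℝ × ℝ => p.1 + p.2) ⁻¹' s))
        = (fun y => x + y) ⁻¹' s := rfl
    rw [hpre, gaussianReal_of_var_ne_zero _ hv₂,
      withDensity_apply _ (hs.preimage (measurable_const_add x)),
      ← lintegral_indicator (hs.preimage (measurable_const_add x))]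
    calc ∫⁻ y, ((fun y => x + y) ⁻¹' s).indicator (gaussianPDF μ₂ v₂) y
        = ∫⁻ y, (fun z => s.indicator 1 z * gaussianPDF μ₂ v₂ (z - x)) (x + y) := by
          congr 1
          funext y
          by_cases h : x + y ∈ s <;>
            simp [Set.indicator_apply, h, add_sub_cancel_left]
      _ = ∫⁻ z, s.indicator 1 z * gaussianPDF μ₂ v₂ (z - x) :=
          lintegral_add_left_eq_self (fun z => s.indicator 1 z * gaussianPDF μ₂ v₂ (z - x)) x
  simp_rw [step1]
  have hmeas2 : ∀ x : ℝ, Measurable fun z => s.indicator 1 z * gaussianPDF μ₂ v₂ (z - x) :=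
    fun x => (hind.mul ((measurable_gaussianPDF _ _).comp (measurable_id.sub_const x)))
  have hg : Measurable fun x : ℝ => ∫⁻ z, s.indicator 1 z * gaussianPDF μ₂ v₂ (z - x) :=
    Measurable.lintegral_prod_right'
      (f := fun p : ℝ × ℝ => s.indicator 1 p.2 * gaussianPDF μ₂ v₂ (p.2 - p.1))
      ((hind.comp measurable_snd).mul
        ((measurable_gaussianPDF μ₂ v₂).comp (measurable_snd.sub measurable_fst)))
  rw [gaussianReal_of_var_ne_zero _ hv₁,
    lintegral_withDensity_eq_lintegral_mul _ (measurable_gaussianPDF _ _) hg]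
  simp only [Pi.mul_apply]
  have push : ∀ x : ℝ, gaussianPDF μ₁ v₁ x * ∫⁻ z, s.indicator 1 z * gaussianPDF μ₂ v₂ (z - x)
      = ∫⁻ z, s.indicator 1 z * (gaussianPDF μ₁ v₁ x * gaussianPDF μ₂ v₂ (z - x)) := by
    intro x
    rw [← lintegral_const_mul _ (hmeas2 x)]
    exact lintegral_congr fun z => by ring
  simp_rw [push]
  rw [lintegral_lintegral_swap (by
    apply Measurable.aemeasurable
    exact (hind.comp measurable_snd).mul
      (((measurable_gaussianPDF μ₁ v₁).comp measurable_fst).mul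
        ((measurable_gaussianPDF μ₂ v₂).comp (measurable_snd.sub measurable_fst))))]
  have inner : ∀ z : ℝ, ∫⁻ x, s.indicator 1 z * (gaussianPDF μ₁ v₁ x * gaussianPDF μ₂ v₂ (z - x))
      = s.indicator 1 z * gaussianPDF (μ₁ + μ₂) (v₁ + v₂) z := by
    intro z
    have hm : Measurable fun x : ℝ => gaussianPDF μ₁ v₁ x * gaussianPDF μ₂ v₂ (z - x) :=
      (measurable_gaussianPDF μ₁ v₁).mul
        ((measurable_gaussianPDF μ₂ v₂).comp (measurable_const.sub measurable_id))
    rw [lintegral_const_mul _ hm]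
    congr 1
    exact conv_pdf_lintegral μ₁ μ₂ v₁ v₂ hv₁ hv₂ z
  simp_rw [inner]
  have : ∀ z : ℝ, s.indicator 1 z * gaussianPDF (μ₁ + μ₂) (v₁ + v₂) z
      = s.indicator (gaussianPDF (μ₁ + μ₂) (v₁ + v₂)) z := by
    intro z
    by_cases h : z ∈ s <;> simp [Set.indicator_apply, h]
  simp_rw [this]
  rw [lintegral_indicator hs, gaussianReal_of_var_ne_zero _ hvs,
    withDensity_apply _ hs]


lemma gaussian_cdf (m : ℝ) (v : ℝ≥0) (hv : v ≠ 0) (t : ℝ) :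
    (gaussianReal m v (Set.Iio t)).toReal = Phi ((t - m) / Real.sqrt v) := by
  have hvpos : (0:ℝ) < v := by positivity
  have hc : (0:ℝ) < Real.sqrt v := Real.sqrt_pos.mpr hvpos
  have h1 : gaussianReal m v
      = Measure.map (fun x => Real.sqrt v * x + m) (gaussianReal 0 1) := by
    have h2 : Measure.map (fun x : ℝ => Real.sqrt v * x) (gaussianReal 0 1)
        = gaussianReal 0 v := by
      rw [gaussianReal_map_const_mul]
      congr 1
      · ring
      · ext
        push_cast
        rw [Real.sq_sqrt hvpos.le]
        simp
    have h3 : (fun x : ℝ => Real.sqrt v * x + m)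
        = (fun x => x + m) ∘ (fun x => Real.sqrt v * x) := rfl
    rw [h3, ← Measure.map_map (by fun_prop) (by fun_prop), h2,
      gaussianReal_map_add_const, zero_add]
  have hpre : (fun x : ℝ => Real.sqrt v * x + m) ⁻¹' Set.Iio t
      = Set.Iio ((t - m) / Real.sqrt v) := by
    ext x
    simp only [Set.mem_preimage, Set.mem_Iio]
    rw [lt_div_iff₀ hc]
    constructor <;> intro h <;> nlinarith
  rw [h1, Measure.map_apply (by fun_prop) measurableSet_Iio, hpre]
  have hsing : gaussianReal 0 1 {(t - m) / Real.sqrt v} = 0 :=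
    gaussianReal_absolutelyContinuous 0 one_ne_zero (measure_singleton _)
  rw [measure_congr (Iio_ae_eq_Iic' hsing)]
  rfl


lemma gaussian_linear (a b : ℝ) (m₁ m₂ : ℝ) (v₁ v₂ : ℝ≥0) :
    Measure.map (fun p : ℝ × ℝ => a * p.1 + b * p.2)
        ((gaussianReal m₁ v₁).prod (gaussianReal m₂ v₂))
      = gaussianReal (a * m₁ + b * m₂)
          (⟨a ^ 2, sq_nonneg a⟩ * v₁ + ⟨b ^ 2, sq_nonneg b⟩ * v₂) := by
  have h : (fun p : ℝ × ℝ => a * p.1 + b * p.2)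
      = (fun p : ℝ × ℝ => p.1 + p.2) ∘ (Prod.map (fun x => a * x) (fun x => b * x)) := rfl
  rw [h, ← Measure.map_map (by fun_prop) (by fun_prop),
    ← Measure.map_prod_map _ _ (by fun_prop) (by fun_prop),
    gaussianReal_map_const_mul, gaussianReal_map_const_mul, gaussian_conv]
  rfl

/-- **Worst-group error lower bound in terms of core and spurious weights.** For a model
`w = [w_core, w_spu, w_noise]` with `(w_core, w_spu) ≠ (0,0)` and a test point from the
minority group `y = 1, a = −1` (`x_core ∼ N(1, σ_core²)`, `x_spu ∼ N(−1, σ_spu²)`,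
`x_noise ∼ N(0, (σ_noise²/N)·I_N)`, independent), if `P(|⟨w_noise, x_noise⟩| > c₃) ≤ c₄`
then `P(w·x < 0) ≥ Φ((−c₃ + w_spu − w_core)/√(w_core²σ_core² + w_spu²σ_spu²)) − c₄`. -/
theorem minority_error_lower_bound
    (N : ℕ) (wcore wspu : ℝ) (wnoise : Fin N → ℝ) (hw : (wcore, wspu) ≠ ((0 : ℝ), (0 : ℝ)))
    (vCore vSpu vNoise : ℝ≥0) (hvCore : 0 < vCore) (hvSpu : 0 < vSpu)
    (c3 c4 : ℝ) (hc3 : 0 < c3) (hc4 : 0 < c4)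
    (hnoise : ((Measure.pi fun _ : Fin N => gaussianReal 0 (vNoise / (N : ℝ≥0)))
        {z | c3 < |∑ j, wnoise j * z j|}).toReal ≤ c4) :
    Phi ((-c3 + wspu - wcore) /
          Real.sqrt (wcore ^ 2 * (vCore : ℝ) + wspu ^ 2 * (vSpu : ℝ))) - c4 ≤
      (((gaussianReal 1 vCore).prod ((gaussianReal (-1) vSpu).prod
            (Measure.pi fun _ : Fin N => gaussianReal 0 (vNoise / (N : ℝ≥0)))))
          {x | wcore * x.1 + wspu * x.2.1 + ∑ j, wnoise j * x.2.2 j < 0}).toReal := by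
  set Pn : Measure (Fin N → ℝ) :=
    Measure.pi fun _ : Fin N => gaussianReal 0 (vNoise / (N : ℝ≥0)) with hPn
  set P₁ : Measure ℝ := gaussianReal 1 vCore
  set P₂ : Measure ℝ := gaussianReal (-1) vSpu
  set μ : Measure (ℝ × ℝ × (Fin N → ℝ)) := P₁.prod (P₂.prod Pn) with hμ
  have : IsProbabilityMeasure μ := by infer_instance
  set A : Set (ℝ × ℝ × (Fin N → ℝ)) := {x | wcore * x.1 + wspu * x.2.1 < -c3} with hA
  set Bc : Set (ℝ × ℝ × (Fin N → ℝ)) := {x | c3 < |∑ j, wnoise j * x.2.2 j|} with hBc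
  set T : Set (ℝ × ℝ × (Fin N → ℝ)) :=
    {x | wcore * x.1 + wspu * x.2.1 + ∑ j, wnoise j * x.2.2 j < 0} with hT
  have hS : Measurable fun x : ℝ × ℝ × (Fin N → ℝ) => ∑ j, wnoise j * x.2.2 j :=
    Finset.measurable_sum _ fun j _ =>
      ((measurable_pi_apply j).comp (measurable_snd.comp measurable_snd)).const_mul _
  have hf1 : Measurable fun x : ℝ × ℝ × (Fin N → ℝ) => wcore * x.1 + wspu * x.2.1 :=
    (measurable_fst.const_mul wcore).add ((measurable_fst.comp measurable_snd).const_mul wspu)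
  have hTmeas : MeasurableSet T := measurableSet_lt (hf1.add hS) measurable_const
  have hBcmeas : MeasurableSet Bc := measurableSet_lt measurable_const hS.abs
  have hsub : A ⊆ T ∪ Bc := by
    intro x hx
    by_cases hb : c3 < |∑ j, wnoise j * x.2.2 j|
    · exact Or.inr hb
    · left
      push_neg at hb
      have := (abs_le.mp hb).2
      have hxa : wcore * x.1 + wspu * x.2.1 < -c3 := hx
      simp only [hT, Set.mem_setOf_eq]
      linarith
  have key1 : μ A ≤ μ T + μ Bc := le_trans (measure_mono hsub) (measure_union_le T Bc)
  have key1' : (μ A).toReal ≤ (μ T).toReal + (μ Bc).toReal := by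
    rw [← ENNReal.toReal_add (measure_ne_top μ T) (measure_ne_top μ Bc)]
    exact ENNReal.toReal_mono (by finiteness) key1
  -- value of μ Bc
  have hmapn : μ.map (fun x : ℝ × ℝ × (Fin N → ℝ) => x.2.2) = Pn := by
    have h : (fun x : ℝ × ℝ × (Fin N → ℝ) => x.2.2) =
        (Prod.snd : ℝ × (Fin N → ℝ) → (Fin N → ℝ)) ∘ Prod.snd := rfl
    rw [h, ← Measure.map_map measurable_snd measurable_snd, hμ, Measure.map_snd_prod,
      measure_univ, one_smul, Measure.map_snd_prod, measure_univ, one_smul]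
  have hBcset : MeasurableSet {z : Fin N → ℝ | c3 < |∑ j, wnoise j * z j|} :=
    measurableSet_lt measurable_const
      (Finset.measurable_sum _ fun j _ => (measurable_pi_apply j).const_mul _).abs
  have hBcval : (μ Bc).toReal ≤ c4 := by
    have h : Bc = (fun x : ℝ × ℝ × (Fin N → ℝ) => x.2.2) ⁻¹'
        {z : Fin N → ℝ | c3 < |∑ j, wnoise j * z j|} := rfl
    have hm22 : Measurable fun x : ℝ × ℝ × (Fin N → ℝ) => x.2.2 :=
      measurable_snd.comp measurable_snd
    rw [h, ← Measure.map_apply hm22 hBcset, hmapn]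
    exact hnoise
  -- value of μ A
  set V : ℝ≥0 := ⟨wcore ^ 2, sq_nonneg wcore⟩ * vCore + ⟨wspu ^ 2, sq_nonneg wspu⟩ * vSpu with hV
  have hVne : V ≠ 0 := by
    intro h
    change (NNReal.mk (wcore ^ 2) (sq_nonneg wcore)) * vCore + NNReal.mk (wspu ^ 2) (sq_nonneg wspu) * vSpu = 0 at h
    rw [add_eq_zero, mul_eq_zero, mul_eq_zero] at h
    apply hw
    have h1 := h.1.resolve_right hvCore.ne'
    have h2 := h.2.resolve_right hvSpu.ne'
    have e1 : wcore = 0 := by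
      have := congrArg (fun t : ℝ≥0 => (t : ℝ)) h1
      simpa [pow_eq_zero_iff] using this
    have e2 : wspu = 0 := by
      have := congrArg (fun t : ℝ≥0 => (t : ℝ)) h2
      simpa [pow_eq_zero_iff] using this
    simp [e1, e2]
  have hmap12 : μ.map (fun x : ℝ × ℝ × (Fin N → ℝ) => (x.1, x.2.1)) = P₁.prod P₂ := by
    have h : (fun x : ℝ × ℝ × (Fin N → ℝ) => (x.1, x.2.1)) =
        Prod.map (id : ℝ → ℝ) (Prod.fst : ℝ × (Fin N → ℝ) → ℝ) := rfl
    rw [h, hμ, ← Measure.map_prod_map _ _ measurable_id measurable_fst,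
      Measure.map_id, Measure.map_fst_prod, measure_univ, one_smul]
  have hlinset : MeasurableSet ((fun p : ℝ × ℝ => wcore * p.1 + wspu * p.2) ⁻¹' Set.Iio (-c3)) :=
    measurableSet_Iio.preimage (by fun_prop)
  have hAval : (μ A).toReal = Phi ((-c3 + wspu - wcore) /
      Real.sqrt (wcore ^ 2 * (vCore : ℝ) + wspu ^ 2 * (vSpu : ℝ))) := by
    have h : A = (fun x : ℝ × ℝ × (Fin N → ℝ) => (x.1, x.2.1)) ⁻¹'
        ((fun p : ℝ × ℝ => wcore * p.1 + wspu * p.2) ⁻¹' Set.Iio (-c3)) := rfl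
    have hm12 : Measurable fun x : ℝ × ℝ × (Fin N → ℝ) => (x.1, x.2.1) :=
      measurable_fst.prodMk (measurable_fst.comp measurable_snd)
    rw [h, ← Measure.map_apply hm12 hlinset, hmap12,
      ← Measure.map_apply (by fun_prop) measurableSet_Iio, gaussian_linear,
      gaussian_cdf _ _ hVne]
    have hcoe : (V : ℝ) = wcore ^ 2 * (vCore : ℝ) + wspu ^ 2 * (vSpu : ℝ) := by
      change ((NNReal.mk (wcore ^ 2) (sq_nonneg wcore) * vCore + NNReal.mk (wspu ^ 2) (sq_nonneg wspu) * vSpu : ℝ≥0) : ℝ) = _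
      rw [NNReal.coe_add, NNReal.coe_mul, NNReal.coe_mul, NNReal.coe_mk, NNReal.coe_mk]
    congr 1
    rw [hcoe]
    ring
  linarith
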